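/- Quantum degenerate Garnier system G(1,1,3), commutativity of the two Hamiltonian flows (Theorem 4.1, case 3): define K1 = q1^2p1p2 + q2^2p1p2 − 2q1q2p1p2 + (t1−t2)(q1^2p1 − 2q1p1^2 − 2q2p1p2) + (2t1^2 − 2t1t2 − α3)q1p1 + α2·q1p2 + α3·q2p1 − α2·q2p2 + α2(t1−t2)q1 + 2α1(t1−t2)p1, and K2 = q1^2p1p2 + q2^2p1p2 − 2q1q2p1p2 − (t1−t2)(q2^2p2 − 2q2p2^2 − 2q1p1p2) − α3·q1p1 + α2·q1p2 + α3·q2p1 − (2t1t2 − 2t2^2 + α2)q2p2 − α3(t1−t2)q2 − 2α1(t1−t2)p2. Then K1·K2 = K2·K1; i.e. the quantum G(1,1,3) Hamiltonians H1 = K1/((h−α1−α2−α3−α4)(t1−t2)) and H2 = K2/((h−α1−α2−α3−α4)(t2−t1)), whose denominators are central, commute. -/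
import Mathlib


set_option maxHeartbeats 4000000 in
/-- Quantum degenerate Garnier system G(1,1,3): commutativity of the two Hamiltonian flows. -/
theorem quantum_garnier_G113_commute
    {R : Type*} [Ring R]
    (h α1 α2 α3 α4 t1 t2 : R)
    (hh : ∀ r : R, h * r = r * h)
    (hA1 : ∀ r : R, α1 * r = r * α1)
    (hA2 : ∀ r : R, α2 * r = r * α2)
    (hA3 : ∀ r : R, α3 * r = r * α3)
    (hA4 : ∀ r : R, α4 * r = r * α4)
    (ht1 : ∀ r : R, t1 * r = r * t1)
    (ht2 : ∀ r : R, t2 * r = r * t2)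
    (q1 p1 q2 p2 : R)
    (hq1p1 : q1 * p1 - p1 * q1 = h)
    (hq2p2 : q2 * p2 - p2 * q2 = h)
    (hq1q2 : q1 * q2 - q2 * q1 = 0)
    (hp1p2 : p1 * p2 - p2 * p1 = 0)
    (hq1p2 : q1 * p2 - p2 * q1 = 0)
    (hq2p1 : q2 * p1 - p1 * q2 = 0)
    (K1 K2 : R)
    (hK1 : K1 =
      q1^2 * p1 * p2 + q2^2 * p1 * p2 - 2 * q1 * q2 * p1 * p2
      + (t1 - t2) * (q1^2 * p1 - 2 * q1 * p1^2 - 2 * q2 * p1 * p2)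
      + (2 * t1^2 - 2 * t1 * t2 - α3) * q1 * p1
      + α2 * q1 * p2
      + α3 * q2 * p1
      - α2 * q2 * p2
      + α2 * (t1 - t2) * q1
      + 2 * α1 * (t1 - t2) * p1)
    (hK2 : K2 =
      q1^2 * p1 * p2 + q2^2 * p1 * p2 - 2 * q1 * q2 * p1 * p2
      - (t1 - t2) * (q2^2 * p2 - 2 * q2 * p2^2 - 2 * q1 * p1 * p2)
      - α3 * q1 * p1
      + α2 * q1 * p2
      + α3 * q2 * p1
      - (2 * t1 * t2 - 2 * t2^2 + α2) * q2 * p2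
      - α3 * (t1 - t2) * q2
      - 2 * α1 * (t1 - t2) * p2) :
    K1 * K2 = K2 * K1 := by
  subst hK1 hK2
  have r_h_A1 : α1 * h = h * α1 := (hh α1).symm
  have r_h_A1n : ∀ x : R, α1 * (h * x) = h * (α1 * x) := fun x => by rw [← mul_assoc, r_h_A1, mul_assoc]
  have r_h_A2 : α2 * h = h * α2 := (hh α2).symm
  have r_h_A2n : ∀ x : R, α2 * (h * x) = h * (α2 * x) := fun x => by rw [← mul_assoc, r_h_A2, mul_assoc]
  have r_h_A3 : α3 * h = h * α3 := (hh α3).symm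
  have r_h_A3n : ∀ x : R, α3 * (h * x) = h * (α3 * x) := fun x => by rw [← mul_assoc, r_h_A3, mul_assoc]
  have r_h_A4 : α4 * h = h * α4 := (hh α4).symm
  have r_h_A4n : ∀ x : R, α4 * (h * x) = h * (α4 * x) := fun x => by rw [← mul_assoc, r_h_A4, mul_assoc]
  have r_h_t1 : t1 * h = h * t1 := (hh t1).symm
  have r_h_t1n : ∀ x : R, t1 * (h * x) = h * (t1 * x) := fun x => by rw [← mul_assoc, r_h_t1, mul_assoc]
  have r_h_t2 : t2 * h = h * t2 := (hh t2).symm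
  have r_h_t2n : ∀ x : R, t2 * (h * x) = h * (t2 * x) := fun x => by rw [← mul_assoc, r_h_t2, mul_assoc]
  have r_h_q1 : q1 * h = h * q1 := (hh q1).symm
  have r_h_q1n : ∀ x : R, q1 * (h * x) = h * (q1 * x) := fun x => by rw [← mul_assoc, r_h_q1, mul_assoc]
  have r_h_q2 : q2 * h = h * q2 := (hh q2).symm
  have r_h_q2n : ∀ x : R, q2 * (h * x) = h * (q2 * x) := fun x => by rw [← mul_assoc, r_h_q2, mul_assoc]
  have r_h_p1 : p1 * h = h * p1 := (hh p1).symm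
  have r_h_p1n : ∀ x : R, p1 * (h * x) = h * (p1 * x) := fun x => by rw [← mul_assoc, r_h_p1, mul_assoc]
  have r_h_p2 : p2 * h = h * p2 := (hh p2).symm
  have r_h_p2n : ∀ x : R, p2 * (h * x) = h * (p2 * x) := fun x => by rw [← mul_assoc, r_h_p2, mul_assoc]
  have r_A1_A2 : α2 * α1 = α1 * α2 := (hA1 α2).symm
  have r_A1_A2n : ∀ x : R, α2 * (α1 * x) = α1 * (α2 * x) := fun x => by rw [← mul_assoc, r_A1_A2, mul_assoc]
  have r_A1_A3 : α3 * α1 = α1 * α3 := (hA1 α3).symm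
  have r_A1_A3n : ∀ x : R, α3 * (α1 * x) = α1 * (α3 * x) := fun x => by rw [← mul_assoc, r_A1_A3, mul_assoc]
  have r_A1_A4 : α4 * α1 = α1 * α4 := (hA1 α4).symm
  have r_A1_A4n : ∀ x : R, α4 * (α1 * x) = α1 * (α4 * x) := fun x => by rw [← mul_assoc, r_A1_A4, mul_assoc]
  have r_A1_t1 : t1 * α1 = α1 * t1 := (hA1 t1).symm
  have r_A1_t1n : ∀ x : R, t1 * (α1 * x) = α1 * (t1 * x) := fun x => by rw [← mul_assoc, r_A1_t1, mul_assoc]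
  have r_A1_t2 : t2 * α1 = α1 * t2 := (hA1 t2).symm
  have r_A1_t2n : ∀ x : R, t2 * (α1 * x) = α1 * (t2 * x) := fun x => by rw [← mul_assoc, r_A1_t2, mul_assoc]
  have r_A1_q1 : q1 * α1 = α1 * q1 := (hA1 q1).symm
  have r_A1_q1n : ∀ x : R, q1 * (α1 * x) = α1 * (q1 * x) := fun x => by rw [← mul_assoc, r_A1_q1, mul_assoc]
  have r_A1_q2 : q2 * α1 = α1 * q2 := (hA1 q2).symm
  have r_A1_q2n : ∀ x : R, q2 * (α1 * x) = α1 * (q2 * x) := fun x => by rw [← mul_assoc, r_A1_q2, mul_assoc]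
  have r_A1_p1 : p1 * α1 = α1 * p1 := (hA1 p1).symm
  have r_A1_p1n : ∀ x : R, p1 * (α1 * x) = α1 * (p1 * x) := fun x => by rw [← mul_assoc, r_A1_p1, mul_assoc]
  have r_A1_p2 : p2 * α1 = α1 * p2 := (hA1 p2).symm
  have r_A1_p2n : ∀ x : R, p2 * (α1 * x) = α1 * (p2 * x) := fun x => by rw [← mul_assoc, r_A1_p2, mul_assoc]
  have r_A2_A3 : α3 * α2 = α2 * α3 := (hA2 α3).symm
  have r_A2_A3n : ∀ x : R, α3 * (α2 * x) = α2 * (α3 * x) := fun x => by rw [← mul_assoc, r_A2_A3, mul_assoc]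
  have r_A2_A4 : α4 * α2 = α2 * α4 := (hA2 α4).symm
  have r_A2_A4n : ∀ x : R, α4 * (α2 * x) = α2 * (α4 * x) := fun x => by rw [← mul_assoc, r_A2_A4, mul_assoc]
  have r_A2_t1 : t1 * α2 = α2 * t1 := (hA2 t1).symm
  have r_A2_t1n : ∀ x : R, t1 * (α2 * x) = α2 * (t1 * x) := fun x => by rw [← mul_assoc, r_A2_t1, mul_assoc]
  have r_A2_t2 : t2 * α2 = α2 * t2 := (hA2 t2).symm
  have r_A2_t2n : ∀ x : R, t2 * (α2 * x) = α2 * (t2 * x) := fun x => by rw [← mul_assoc, r_A2_t2, mul_assoc]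
  have r_A2_q1 : q1 * α2 = α2 * q1 := (hA2 q1).symm
  have r_A2_q1n : ∀ x : R, q1 * (α2 * x) = α2 * (q1 * x) := fun x => by rw [← mul_assoc, r_A2_q1, mul_assoc]
  have r_A2_q2 : q2 * α2 = α2 * q2 := (hA2 q2).symm
  have r_A2_q2n : ∀ x : R, q2 * (α2 * x) = α2 * (q2 * x) := fun x => by rw [← mul_assoc, r_A2_q2, mul_assoc]
  have r_A2_p1 : p1 * α2 = α2 * p1 := (hA2 p1).symm
  have r_A2_p1n : ∀ x : R, p1 * (α2 * x) = α2 * (p1 * x) := fun x => by rw [← mul_assoc, r_A2_p1, mul_assoc]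
  have r_A2_p2 : p2 * α2 = α2 * p2 := (hA2 p2).symm
  have r_A2_p2n : ∀ x : R, p2 * (α2 * x) = α2 * (p2 * x) := fun x => by rw [← mul_assoc, r_A2_p2, mul_assoc]
  have r_A3_A4 : α4 * α3 = α3 * α4 := (hA3 α4).symm
  have r_A3_A4n : ∀ x : R, α4 * (α3 * x) = α3 * (α4 * x) := fun x => by rw [← mul_assoc, r_A3_A4, mul_assoc]
  have r_A3_t1 : t1 * α3 = α3 * t1 := (hA3 t1).symm
  have r_A3_t1n : ∀ x : R, t1 * (α3 * x) = α3 * (t1 * x) := fun x => by rw [← mul_assoc, r_A3_t1, mul_assoc]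
  have r_A3_t2 : t2 * α3 = α3 * t2 := (hA3 t2).symm
  have r_A3_t2n : ∀ x : R, t2 * (α3 * x) = α3 * (t2 * x) := fun x => by rw [← mul_assoc, r_A3_t2, mul_assoc]
  have r_A3_q1 : q1 * α3 = α3 * q1 := (hA3 q1).symm
  have r_A3_q1n : ∀ x : R, q1 * (α3 * x) = α3 * (q1 * x) := fun x => by rw [← mul_assoc, r_A3_q1, mul_assoc]
  have r_A3_q2 : q2 * α3 = α3 * q2 := (hA3 q2).symm
  have r_A3_q2n : ∀ x : R, q2 * (α3 * x) = α3 * (q2 * x) := fun x => by rw [← mul_assoc, r_A3_q2, mul_assoc]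
  have r_A3_p1 : p1 * α3 = α3 * p1 := (hA3 p1).symm
  have r_A3_p1n : ∀ x : R, p1 * (α3 * x) = α3 * (p1 * x) := fun x => by rw [← mul_assoc, r_A3_p1, mul_assoc]
  have r_A3_p2 : p2 * α3 = α3 * p2 := (hA3 p2).symm
  have r_A3_p2n : ∀ x : R, p2 * (α3 * x) = α3 * (p2 * x) := fun x => by rw [← mul_assoc, r_A3_p2, mul_assoc]
  have r_A4_t1 : t1 * α4 = α4 * t1 := (hA4 t1).symm
  have r_A4_t1n : ∀ x : R, t1 * (α4 * x) = α4 * (t1 * x) := fun x => by rw [← mul_assoc, r_A4_t1, mul_assoc]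
  have r_A4_t2 : t2 * α4 = α4 * t2 := (hA4 t2).symm
  have r_A4_t2n : ∀ x : R, t2 * (α4 * x) = α4 * (t2 * x) := fun x => by rw [← mul_assoc, r_A4_t2, mul_assoc]
  have r_A4_q1 : q1 * α4 = α4 * q1 := (hA4 q1).symm
  have r_A4_q1n : ∀ x : R, q1 * (α4 * x) = α4 * (q1 * x) := fun x => by rw [← mul_assoc, r_A4_q1, mul_assoc]
  have r_A4_q2 : q2 * α4 = α4 * q2 := (hA4 q2).symm
  have r_A4_q2n : ∀ x : R, q2 * (α4 * x) = α4 * (q2 * x) := fun x => by rw [← mul_assoc, r_A4_q2, mul_assoc]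
  have r_A4_p1 : p1 * α4 = α4 * p1 := (hA4 p1).symm
  have r_A4_p1n : ∀ x : R, p1 * (α4 * x) = α4 * (p1 * x) := fun x => by rw [← mul_assoc, r_A4_p1, mul_assoc]
  have r_A4_p2 : p2 * α4 = α4 * p2 := (hA4 p2).symm
  have r_A4_p2n : ∀ x : R, p2 * (α4 * x) = α4 * (p2 * x) := fun x => by rw [← mul_assoc, r_A4_p2, mul_assoc]
  have r_t1_t2 : t2 * t1 = t1 * t2 := (ht1 t2).symm
  have r_t1_t2n : ∀ x : R, t2 * (t1 * x) = t1 * (t2 * x) := fun x => by rw [← mul_assoc, r_t1_t2, mul_assoc]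
  have r_t1_q1 : q1 * t1 = t1 * q1 := (ht1 q1).symm
  have r_t1_q1n : ∀ x : R, q1 * (t1 * x) = t1 * (q1 * x) := fun x => by rw [← mul_assoc, r_t1_q1, mul_assoc]
  have r_t1_q2 : q2 * t1 = t1 * q2 := (ht1 q2).symm
  have r_t1_q2n : ∀ x : R, q2 * (t1 * x) = t1 * (q2 * x) := fun x => by rw [← mul_assoc, r_t1_q2, mul_assoc]
  have r_t1_p1 : p1 * t1 = t1 * p1 := (ht1 p1).symm
  have r_t1_p1n : ∀ x : R, p1 * (t1 * x) = t1 * (p1 * x) := fun x => by rw [← mul_assoc, r_t1_p1, mul_assoc]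
  have r_t1_p2 : p2 * t1 = t1 * p2 := (ht1 p2).symm
  have r_t1_p2n : ∀ x : R, p2 * (t1 * x) = t1 * (p2 * x) := fun x => by rw [← mul_assoc, r_t1_p2, mul_assoc]
  have r_t2_q1 : q1 * t2 = t2 * q1 := (ht2 q1).symm
  have r_t2_q1n : ∀ x : R, q1 * (t2 * x) = t2 * (q1 * x) := fun x => by rw [← mul_assoc, r_t2_q1, mul_assoc]
  have r_t2_q2 : q2 * t2 = t2 * q2 := (ht2 q2).symm
  have r_t2_q2n : ∀ x : R, q2 * (t2 * x) = t2 * (q2 * x) := fun x => by rw [← mul_assoc, r_t2_q2, mul_assoc]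
  have r_t2_p1 : p1 * t2 = t2 * p1 := (ht2 p1).symm
  have r_t2_p1n : ∀ x : R, p1 * (t2 * x) = t2 * (p1 * x) := fun x => by rw [← mul_assoc, r_t2_p1, mul_assoc]
  have r_t2_p2 : p2 * t2 = t2 * p2 := (ht2 p2).symm
  have r_t2_p2n : ∀ x : R, p2 * (t2 * x) = t2 * (p2 * x) := fun x => by rw [← mul_assoc, r_t2_p2, mul_assoc]
  have r_q1_q2 : q2 * q1 = q1 * q2 := (sub_eq_zero.mp hq1q2).symm
  have r_q1_q2n : ∀ x : R, q2 * (q1 * x) = q1 * (q2 * x) := fun x => by rw [← mul_assoc, r_q1_q2, mul_assoc]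
  have r_q1_p1 : p1 * q1 = q1 * p1 - h := by rw [eq_sub_iff_add_eq, ← hq1p1]; abel
  have r_q1_p1n : ∀ x : R, p1 * (q1 * x) = q1 * (p1 * x) - h * x := fun x => by rw [← mul_assoc, r_q1_p1, sub_mul, mul_assoc]
  have r_q1_p2 : p2 * q1 = q1 * p2 := (sub_eq_zero.mp hq1p2).symm
  have r_q1_p2n : ∀ x : R, p2 * (q1 * x) = q1 * (p2 * x) := fun x => by rw [← mul_assoc, r_q1_p2, mul_assoc]
  have r_q2_p1 : p1 * q2 = q2 * p1 := (sub_eq_zero.mp hq2p1).symm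
  have r_q2_p1n : ∀ x : R, p1 * (q2 * x) = q2 * (p1 * x) := fun x => by rw [← mul_assoc, r_q2_p1, mul_assoc]
  have r_q2_p2 : p2 * q2 = q2 * p2 - h := by rw [eq_sub_iff_add_eq, ← hq2p2]; abel
  have r_q2_p2n : ∀ x : R, p2 * (q2 * x) = q2 * (p2 * x) - h * x := fun x => by rw [← mul_assoc, r_q2_p2, sub_mul, mul_assoc]
  have r_p1_p2 : p2 * p1 = p1 * p2 := (sub_eq_zero.mp hp1p2).symm
  have r_p1_p2n : ∀ x : R, p2 * (p1 * x) = p1 * (p2 * x) := fun x => by rw [← mul_assoc, r_p1_p2, mul_assoc]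
  simp only [pow_succ, pow_zero, one_mul, two_mul, sub_eq_add_neg, neg_add, neg_neg,
    mul_add, add_mul, mul_neg, neg_mul, mul_assoc]
  simp only [mul_add, add_mul, mul_neg, neg_mul, neg_add, neg_neg, sub_eq_add_neg, mul_assoc, r_h_A1, r_h_A1n, r_h_A2, r_h_A2n, r_h_A3, r_h_A3n, r_h_A4, r_h_A4n, r_h_t1, r_h_t1n, r_h_t2, r_h_t2n, r_h_q1, r_h_q1n, r_h_q2, r_h_q2n, r_h_p1, r_h_p1n, r_h_p2, r_h_p2n, r_A1_A2, r_A1_A2n, r_A1_A3, r_A1_A3n, r_A1_A4, r_A1_A4n, r_A1_t1, r_A1_t1n, r_A1_t2, r_A1_t2n, r_A1_q1, r_A1_q1n, r_A1_q2, r_A1_q2n, r_A1_p1, r_A1_p1n, r_A1_p2, r_A1_p2n, r_A2_A3, r_A2_A3n, r_A2_A4, r_A2_A4n, r_A2_t1, r_A2_t1n, r_A2_t2, r_A2_t2n, r_A2_q1, r_A2_q1n, r_A2_q2, r_A2_q2n, r_A2_p1, r_A2_p1n, r_A2_p2, r_A2_p2n, r_A3_A4, r_A3_A4n, r_A3_t1,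 r_A3_t1n, r_A3_t2, r_A3_t2n, r_A3_q1, r_A3_q1n, r_A3_q2, r_A3_q2n, r_A3_p1, r_A3_p1n, r_A3_p2, r_A3_p2n, r_A4_t1, r_A4_t1n, r_A4_t2, r_A4_t2n, r_A4_q1, r_A4_q1n, r_A4_q2, r_A4_q2n, r_A4_p1, r_A4_p1n, r_A4_p2, r_A4_p2n, r_t1_t2, r_t1_t2n, r_t1_q1, r_t1_q1n, r_t1_q2, r_t1_q2n, r_t1_p1, r_t1_p1n, r_t1_p2, r_t1_p2n, r_t2_q1, r_t2_q1n, r_t2_q2, r_t2_q2n, r_t2_p1, r_t2_p1n, r_t2_p2, r_t2_p2n, r_q1_q2, r_q1_q2n, r_q1_p1, r_q1_p1n, r_q1_p2, r_q1_p2n, r_q2_p1, r_q2_p1n, r_q2_p2, r_q2_p2n, r_p1_p2, r_p1_p2n]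
  abel
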